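/- Let D be a noncommutative division ring with center F, and let A be an abelian maximal subgroup of D^*. Then for every x ∈ D^* \ A, we have A ∩ x⁻¹Ax = F^* (the nonzero central elements). Equivalently, the image of A in D^*/F^* is a malnormal subgroup. -/

import Mathlib

/-- Key elementary lemma (Herstein-style): if `a` commutes with all of its
conjugates in a division ring, then `a` is central. -/
theorem key_center {D : Type*} [DivisionRing D] {a : D}
    (h : ∀ x : D, x ≠ 0 → a * (x⁻¹ * a * x) = (x⁻¹ * a * x) * a) :
    a ∈ Subring.center D := by
  rw [Subring.mem_center_iff]
  intro x
  suffices hs : a * x = x * a by exact hs.symm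
  by_cases hx : x = 0
  · simp [hx]
  by_cases hx1 : x + 1 = 0
  · have : x = -1 := eq_neg_of_add_eq_zero_left hx1
    subst this; simp
  have hc := h x hx
  have hd := h (x + 1) hx1
  set c := x⁻¹ * a * x with hcdef
  set d := (x + 1)⁻¹ * a * (x + 1) with hddef
  have hxc : x * c = a * x := by
    rw [hcdef, ← mul_assoc, ← mul_assoc, mul_inv_cancel₀ hx, one_mul]
  have hxd : (x + 1) * d = a * (x + 1) := by
    rw [hddef, ← mul_assoc, ← mul_assoc, mul_inv_cancel₀ hx1, one_mul]
  have hstep : x * d + d = x * c + a := by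
    have h1 : x * d + d = (x + 1) * d := by rw [add_mul, one_mul]
    rw [h1, hxd, mul_add, mul_one, hxc]
  by_cases hdc : d = c
  · rw [hdc] at hstep
    have hca : c = a := add_left_cancel hstep
    have : x * c = x * a := by rw [hca]
    rw [hxc] at this
    exact this
  · have hkey : x * (d - c) = a - d := by
      rw [mul_sub, sub_eq_sub_iff_add_eq_add]
      rw [hstep, add_comm]
    have hcomm : a * (a - d) = (a - d) * a := by
      rw [mul_sub, sub_mul, hd]
    have e2 : (d - c) * a = a * (d - c) := by
      rw [sub_mul, mul_sub, hc, hd]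
    have e1 : a * (x * (d - c)) = (x * (d - c)) * a := by
      rw [hkey]; exact hcomm
    have h2 : (a * x - x * a) * (d - c) = 0 := by
      have e3 : a * x * (d - c) = x * a * (d - c) :=
        calc a * x * (d - c) = a * (x * (d - c)) := mul_assoc _ _ _
          _ = (x * (d - c)) * a := e1
          _ = x * ((d - c) * a) := mul_assoc _ _ _
          _ = x * (a * (d - c)) := by rw [e2]
          _ = x * a * (d - c) := (mul_assoc _ _ _).symm
      rw [sub_mul, e3, sub_self]
    have h3 : d - c ≠ 0 := sub_ne_zero.mpr hdc
    have h4 : a * x - x * a = 0 := (mul_eq_zero.mp h2).resolve_right h3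
    exact sub_eq_zero.mp h4

/-- If `A` is an abelian maximal subgroup of `Dˣ` (`D` a noncommutative
division ring with center `F`), then for every `x ∈ Dˣ \ A` we have
`A ∩ x⁻¹Ax = F^*`; i.e. the image of `A` in `Dˣ/F^*` is malnormal. -/
theorem stmt_3 {D : Type*} [DivisionRing D]
    (hD : ∃ a b : D, a * b ≠ b * a)
    (A : Subgroup Dˣ) (hmax : IsCoatom A)
    (habel : ∀ a ∈ A, ∀ b ∈ A, a * b = b * a) :
    ∀ x : Dˣ, x ∉ A → ∀ u : Dˣ,
      (u ∈ A ∧ x * u * x⁻¹ ∈ A) ↔ (u : D) ∈ Subring.center D := by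
  -- Dˣ is not abelian
  have habs : ¬ ∀ g h : Dˣ, g * h = h * g := by
    intro hall
    obtain ⟨a, b, hab⟩ := hD
    have ha : a ≠ 0 := by rintro rfl; simp at hab
    have hb : b ≠ 0 := by rintro rfl; simp at hab
    have h1 := congrArg Units.val (hall (Units.mk0 a ha) (Units.mk0 b hb))
    simp only [Units.val_mul, Units.val_mk0] at h1
    exact hab h1
  -- a central element (of D) lies in A
  have hZA : ∀ u : Dˣ, (u : D) ∈ Subring.center D → u ∈ A := by
    intro u hu
    set C := Subgroup.centralizer (A : Set Dˣ) with hCdef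
    have hAC : A ≤ C := fun a ha => Subgroup.mem_centralizer_iff.mpr
      fun b hb => habel b hb a ha
    have hAC2 : A ≤ Subgroup.centralizer (C : Set Dˣ) :=
      fun a ha => Subgroup.mem_centralizer_iff.mpr
        fun c hc => (Subgroup.mem_centralizer_iff.mp hc a ha).symm
    have hC2 : Subgroup.centralizer (C : Set Dˣ) = A := by
      by_contra hne
      have htop : Subgroup.centralizer (C : Set Dˣ) = ⊤ :=
        hmax.2 _ (lt_of_le_of_ne hAC2 (Ne.symm hne))
      have hCc : ∀ c ∈ C, ∀ g : Dˣ, c * g = g * c := by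
        intro c hc g
        have hg : g ∈ Subgroup.centralizer (C : Set Dˣ) := htop ▸ Subgroup.mem_top g
        exact Subgroup.mem_centralizer_iff.mp hg c hc
      have hCtop : ∀ g : Dˣ, g ∈ C := fun g => Subgroup.mem_centralizer_iff.mpr
        fun a ha => hCc a (hAC ha) g
      exact habs fun g h => hCc g (hCtop g) h
    rw [← hC2]
    exact Subgroup.mem_centralizer_iff.mpr fun c _ => Units.ext (by
      simp only [Units.val_mul]
      exact Subring.mem_center_iff.mp hu (c : D))
  -- the centralizer of any noncentral element of A equals A
  have hcent : ∀ w : Dˣ, w ∈ A → (w : D) ∉ Subring.center D →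
      Subgroup.centralizer {w} = A := by
    intro w hw hwc
    have h1 : A ≤ Subgroup.centralizer {w} := by
      intro a ha
      rw [Subgroup.mem_centralizer_iff]
      rintro h hh
      rw [Set.mem_singleton_iff] at hh
      rw [hh]
      exact habel w hw a ha
    have h2 : Subgroup.centralizer {w} ≠ ⊤ := by
      intro htop
      apply hwc
      rw [Subring.mem_center_iff]
      intro g
      by_cases hg : g = 0
      · simp [hg]
      have hmem : Units.mk0 g hg ∈ Subgroup.centralizer {w} := htop ▸ Subgroup.mem_top _
      have he := Subgroup.mem_centralizer_iff.mp hmem w (Set.mem_singleton w)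
      have he2 := congrArg Units.val he
      simp only [Units.val_mul, Units.val_mk0] at he2
      exact he2.symm
    rcases h1.lt_or_eq with hlt | heq
    · exact absurd (hmax.2 _ hlt) h2
    · exact heq.symm
  intro x hx u
  constructor
  · rintro ⟨huA, hvA⟩
    by_contra hu
    -- the conjugate is also noncentral
    have hvnc : ((x * u * x⁻¹ : Dˣ) : D) ∉ Subring.center D := by
      intro hv
      apply hu
      have hxv : (x : D) * ((x * u * x⁻¹ : Dˣ) : D) = ((x * u * x⁻¹ : Dˣ) : D) * x :=
        Subring.mem_center_iff.mp hv (x : D)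
      have hval : ((x * u * x⁻¹ : Dˣ) : D) * (x : D) = (x : D) * (u : D) := by
        simp [Units.val_mul, Units.val_inv_eq_inv_val, mul_assoc,
          inv_mul_cancel₀ (Units.ne_zero x)]
      rw [hval] at hxv
      have : ((x * u * x⁻¹ : Dˣ) : D) = (u : D) :=
        mul_left_cancel₀ (Units.ne_zero x) hxv
      rw [← this]; exact hv
    have hcu : Subgroup.centralizer {u} = A := hcent u huA hu
    have hcv : Subgroup.centralizer {x * u * x⁻¹} = A := hcent _ hvA hvnc
    -- x normalizes A
    have hxn : x ∈ Subgroup.normalizer (A : Set Dˣ) := by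
      rw [Subgroup.mem_normalizer_iff]
      intro h
      conv_lhs => rw [← hcu]
      conv_rhs => rw [← hcv]
      have memu : ∀ g : Dˣ, g ∈ Subgroup.centralizer {u} ↔ u * g = g * u := by
        intro g
        rw [Subgroup.mem_centralizer_iff]
        constructor
        · intro hg; exact hg u (Set.mem_singleton u)
        · rintro hg h' hh'; rw [Set.mem_singleton_iff] at hh'; subst hh'; exact hg
      have memv : ∀ g : Dˣ, g ∈ Subgroup.centralizer {x * u * x⁻¹} ↔
          (x * u * x⁻¹) * g = g * (x * u * x⁻¹) := by
        intro g
        rw [Subgroup.mem_centralizer_iff]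
        constructor
        · intro hg; exact hg _ (Set.mem_singleton _)
        · rintro hg h' hh'; rw [Set.mem_singleton_iff] at hh'; subst hh'; exact hg
      rw [memu, memv]
      set φ := MulAut.conj x with hφ
      have hφu : x * u * x⁻¹ = φ u := rfl
      have hφh : x * h * x⁻¹ = φ h := rfl
      rw [hφu, hφh]
      constructor
      · intro e; rw [← map_mul, ← map_mul, e]
      · intro e
        apply φ.injective
        rw [map_mul, map_mul]
        exact e
    -- hence A is normal in Dˣ
    have hnt : Subgroup.normalizer (A : Set Dˣ) = ⊤ := by
      apply hmax.2
      exact lt_of_le_of_ne Subgroup.le_normalizer (fun he => hx (he ▸ hxn))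
    have hAnorm : ∀ g : Dˣ, ∀ h ∈ A, g * h * g⁻¹ ∈ A := by
      intro g h hh
      exact (Subgroup.mem_normalizer_iff.mp (hnt ▸ Subgroup.mem_top g) h).mp hh
    -- apply the key lemma to get a contradiction
    apply hu
    apply key_center
    intro b hb
    set w : Dˣ := Units.mk0 b hb with hwdef
    have h1 : w⁻¹ * u * w ∈ A := by
      have := hAnorm w⁻¹ u huA
      rwa [inv_inv] at this
    have h2 : u * (w⁻¹ * u * w) = (w⁻¹ * u * w) * u := habel u huA _ h1
    have h3 := congrArg Units.val h2
    simp only [Units.val_mul, Units.val_inv_eq_inv_val, Units.val_mk0, hwdef] at h3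
    exact h3
  · intro hu
    have huA := hZA u hu
    have hxu : x * u * x⁻¹ = u := by
      have hc : (x : D) * (u : D) = (u : D) * (x : D) :=
        Subring.mem_center_iff.mp hu (x : D)
      have : x * u = u * x := Units.ext (by simp only [Units.val_mul]; exact hc)
      rw [this, mul_inv_cancel_right]
    exact ⟨huA, by rw [hxu]; exact huA⟩
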